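/- For λ > 1 and D ≥ 2, define the geometric priors P(s_m) = λ^m / Σ_{q=0}^{D−1} λ^q and Q(s_m) = λ^{−m} / Σ_{q=0}^{D−1} λ^{−q} on states s_0, …, s_{D−1}. Then the L1 distance satisfies ||P − Q||_1 ≥ 2(λ−1)(λ^{D−1}−1)/(λ^D − 1) ≥ 2(λ−1)/(λ+1). -/
import Mathlib


open Finset

/-- For `λ > 1` and `D ≥ 2`, the geometric priors `P(s_m) = λ^m / Σ_q λ^q` and
`Q(s_m) = λ^{-m} / Σ_q λ^{-q}` on `D` states have L1 distance at least
`2(λ-1)(λ^{D-1}-1)/(λ^D-1)`, which is at least `2(λ-1)/(λ+1)`. -/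
theorem geometric_priors_l1_lower_bound (l : ℝ) (hl : 1 < l) (D : ℕ) (hD : 2 ≤ D) :
    (∑ m ∈ Finset.range D,
        |l ^ m / (∑ q ∈ Finset.range D, l ^ q) -
          l⁻¹ ^ m / (∑ q ∈ Finset.range D, l⁻¹ ^ q)| ≥
      2 * (l - 1) * (l ^ (D - 1) - 1) / (l ^ D - 1)) ∧
    2 * (l - 1) * (l ^ (D - 1) - 1) / (l ^ D - 1) ≥ 2 * (l - 1) / (l + 1) := by
  obtain ⟨n, rfl⟩ : ∃ n, D = n + 2 := ⟨D - 2, by omega⟩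
  have hD1 : n + 2 - 1 = n + 1 := by omega
  have hl0 : (0:ℝ) < l := lt_trans one_pos hl
  have hlne : l ≠ 1 := ne_of_gt hl
  set S : ℝ := ∑ q ∈ Finset.range (n+2), l ^ q with hS
  set T : ℝ := ∑ q ∈ Finset.range (n+2), l⁻¹ ^ q with hT
  have hSpos : 0 < S := Finset.sum_pos (fun i _ => pow_pos hl0 i) ⟨0, by simp⟩
  have hTpos : 0 < T := Finset.sum_pos (fun i _ => pow_pos (inv_pos.2 hl0) i) ⟨0, by simp⟩
  have hpowD : (1:ℝ) < l ^ (n+2) := one_lt_pow₀ hl (by omega)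
  have hpowD1 : (1:ℝ) < l ^ (n+1) := one_lt_pow₀ hl (by omega)
  -- geometric sum formulas
  have hSval : S = (l ^ (n+2) - 1) / (l - 1) := geom_sum_eq hlne (n+2)
  have hinvne : l⁻¹ ≠ 1 := fun h => hlne (inv_eq_one.mp h)
  have hinvne0 : l⁻¹ - 1 ≠ 0 := sub_ne_zero.2 hinvne
  have hTval : T = (l ^ (n+2) - 1) / ((l - 1) * l ^ (n+1)) := by
    rw [hT, geom_sum_eq hinvne (n+2), inv_pow]
    rw [div_eq_div_iff hinvne0 (mul_ne_zero (sub_ne_zero.2 hlne) (pow_ne_zero _ hl0.ne'))]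
    field_simp
    ring
  set g : ℕ → ℝ := fun m => l ^ m / S - l⁻¹ ^ m / T with hg
  have hzero : ∑ m ∈ Finset.range (n+2), g m = 0 := by
    rw [Finset.sum_sub_distrib, ← Finset.sum_div, ← Finset.sum_div, ← hS, ← hT,
      div_self hSpos.ne', div_self hTpos.ne', sub_self]
  -- value of g 0
  have hg0 : g 0 = -((l - 1) * (l ^ (n+1) - 1) / (l ^ (n+2) - 1)) := by
    have h1 : (l:ℝ) - 1 ≠ 0 := sub_ne_zero.2 hlne
    have h2 : (l:ℝ) ^ (n+2) - 1 ≠ 0 := sub_ne_zero.2 hpowD.ne'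
    rw [hg]
    simp only [pow_zero]
    rw [hSval, hTval]
    field_simp
    ring
  have hg0abs : |g 0| = (l - 1) * (l ^ (n+1) - 1) / (l ^ (n+2) - 1) := by
    rw [hg0, abs_neg, abs_of_nonneg]
    apply div_nonneg (mul_nonneg (by linarith) (by linarith)) (by linarith)
  constructor
  · -- L1 lower bound
    have h0mem : (0:ℕ) ∈ Finset.range (n+2) := by simp
    have hsplit : ∑ m ∈ Finset.range (n+2), |g m|
        = |g 0| + ∑ m ∈ (Finset.range (n+2)).erase 0, |g m| :=
      (Finset.add_sum_erase _ _ h0mem).symm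
    have hrest : ∑ m ∈ (Finset.range (n+2)).erase 0, g m = -g 0 := by
      have := Finset.add_sum_erase (Finset.range (n+2)) g h0mem
      linarith [this.trans hzero]
    have habs : |g 0| ≤ ∑ m ∈ (Finset.range (n+2)).erase 0, |g m| := by
      calc |g 0| = |∑ m ∈ (Finset.range (n+2)).erase 0, g m| := by rw [hrest, abs_neg]
        _ ≤ _ := Finset.abs_sum_le_sum_abs _ _
    have : 2 * (l - 1) * (l ^ (n+2-1) - 1) / (l ^ (n+2) - 1) = 2 * |g 0| := by
      rw [hg0abs, hD1]; ring
    rw [hsplit, this]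
    linarith
  · -- second inequality
    rw [hD1, ge_iff_le, div_le_div_iff₀ (by linarith) (by linarith)]
    have hle : l ≤ l ^ (n+1) := by
      calc l = l ^ 1 := (pow_one l).symm
        _ ≤ l ^ (n+1) := pow_le_pow_right₀ hl.le (by omega)
    nlinarith [mul_nonneg (sub_nonneg.2 hl.le) (sub_nonneg.2 hle), pow_succ l (n+1)]
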